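/- Fix k ≥ 1 and let f, g : ℓ → ℂ be such that the families α ↦ (α!/|α|!) |f_α|^2 and α ↦ (α!/|α|!) |g_α|^2 are summable. Define (M_k f)_α = f_{α − e_k} if α_k ≥ 1 and 0 otherwise, and (𝓡_k g)_β = ((β_k + 1)/(|β| + 1)) g_{β + e_k}. Then the families α ↦ (α!/|α|!) (M_k f)_α \overline{g_α} and β ↦ (β!/|β|!) f_β \overline{(𝓡_k g)_β} are summable and Σ_{α ∈ ℓ} (α!/|α|!) (M_k f)_α \overline{g_α} = Σ_{β ∈ ℓ} (β!/|β|!) f_β \overline{(𝓡_k g)_β}. -/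

import Mathlib

noncomputable def arvW (γ : ℕ →₀ ℕ) : ℝ :=
  (γ.prod fun _ n => (n.factorial : ℝ)) / ((γ.sum fun _ n => n).factorial : ℝ)

lemma arvW_nonneg (γ : ℕ →₀ ℕ) : 0 ≤ arvW γ := by
  apply div_nonneg _ (by positivity)
  exact Finset.prod_nonneg fun i _ => by positivity

lemma prod_cast_R (γ : ℕ →₀ ℕ) :
    (γ.prod fun _ n => (n.factorial : ℝ)) = ((γ.prod fun _ n => n.factorial : ℕ) : ℝ) := by
  rw [Finsupp.prod, Finsupp.prod, Nat.cast_prod]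

lemma prod_cast_C (γ : ℕ →₀ ℕ) :
    (γ.prod fun _ n => (n.factorial : ℂ)) = ((γ.prod fun _ n => n.factorial : ℕ) : ℂ) := by
  rw [Finsupp.prod, Finsupp.prod, Nat.cast_prod]

lemma arvW_C (γ : ℕ →₀ ℕ) :
    (γ.prod fun _ n => (n.factorial : ℂ)) / (((γ.sum fun _ n => n).factorial : ℕ) : ℂ)
      = ((arvW γ : ℝ) : ℂ) := by
  rw [arvW, prod_cast_R, prod_cast_C, Complex.ofReal_div, Complex.ofReal_natCast,
    Complex.ofReal_natCast]

lemma cast_ratio (a b : ℕ) :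
    ((((a:ℝ)+1)/((b:ℝ)+1) : ℝ) : ℂ) = ((a:ℂ)+1)/((b:ℂ)+1) := by
  push_cast
  ring

lemma aux_sum (k : ℕ) (β : ℕ →₀ ℕ) :
    ((β + Finsupp.single k 1).sum fun _ n => n) = (β.sum fun _ n => n) + 1 := by
  rw [Finsupp.sum_add_index' (fun _ => rfl) (fun _ _ _ => rfl),
    Finsupp.sum_single_index rfl]

lemma aux_prod (k : ℕ) (β : ℕ →₀ ℕ) :
    ((β + Finsupp.single k 1).prod fun _ n => n.factorial)
      = (β k + 1) * β.prod fun _ n => n.factorial := by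
  classical
  have hk : k ∉ β.support.erase k := Finset.notMem_erase _ _
  have key : ∀ γ : ℕ →₀ ℕ, γ.support ⊆ insert k (β.support.erase k) →
      γ.prod (fun _ n => n.factorial) = ∏ i ∈ insert k (β.support.erase k), (γ i).factorial :=
    fun γ hγ => Finsupp.prod_of_support_subset γ hγ _ (fun i _ => rfl)
  have h1 := key (β + Finsupp.single k 1) (by
    intro i hi
    rcases eq_or_ne i k with rfl | h
    · exact Finset.mem_insert_self _ _
    · apply Finset.mem_insert_of_mem
      rw [Finset.mem_erase]
      refine ⟨h, ?_⟩
      simp only [Finsupp.mem_support_iff, Finsupp.add_apply,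
        Finsupp.single_apply, if_neg (Ne.symm h), add_zero] at hi ⊢
      exact hi)
  have h2 := key β (by
    intro i hi
    rcases eq_or_ne i k with rfl | h
    · exact Finset.mem_insert_self _ _
    · exact Finset.mem_insert_of_mem (Finset.mem_erase.2 ⟨h, hi⟩))
  rw [h1, h2, Finset.prod_insert hk, Finset.prod_insert hk]
  have hβk : ((β + Finsupp.single k 1 : ℕ →₀ ℕ)) k = β k + 1 := by
    rw [Finsupp.add_apply, Finsupp.single_eq_same]
  have hrest : ∀ i ∈ β.support.erase k,
      (((β + Finsupp.single k 1 : ℕ →₀ ℕ)) i).factorial = (β i).factorial := by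
    intro i hi
    have h : i ≠ k := (Finset.mem_erase.1 hi).1
    rw [Finsupp.add_apply, Finsupp.single_apply, if_neg (Ne.symm h), add_zero]
  rw [hβk, Finset.prod_congr rfl hrest, Nat.factorial_succ, mul_assoc]

lemma arvW_shift (k : ℕ) (β : ℕ →₀ ℕ) :
    arvW (β + Finsupp.single k 1)
      = arvW β * ((β k + 1) / ((β.sum fun _ n => n) + 1)) := by
  rw [arvW, arvW, prod_cast_R, prod_cast_R, aux_prod, aux_sum, Nat.factorial_succ]
  have h1 : (((β.sum fun _ n => n).factorial : ℕ) : ℝ) ≠ 0 := by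
    exact_mod_cast (Nat.factorial_pos _).ne'
  have h2 : ((β.sum fun _ n => n : ℕ) : ℝ) + 1 ≠ 0 := by positivity
  push_cast
  field_simp

lemma arvW_le (k : ℕ) (β : ℕ →₀ ℕ) : arvW (β + Finsupp.single k 1) ≤ arvW β := by
  rw [arvW_shift]
  have hk : β k ≤ β.sum fun _ n => n := by
    rcases eq_or_ne (β k) 0 with h | h
    · simp [h]
    · rw [Finsupp.sum]
      exact Finset.single_le_sum (f := fun i => β i) (fun _ _ => Nat.zero_le _)
        (Finsupp.mem_support_iff.2 h)
  have hb : (β k : ℝ) + 1 ≤ ((β.sum fun _ n => n : ℕ) : ℝ) + 1 := by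
    exact_mod_cast Nat.add_le_add_right hk 1
  have hle1 : ((β k : ℝ) + 1) / (((β.sum fun _ n => n : ℕ) : ℝ) + 1) ≤ 1 :=
    div_le_one_of_le₀ hb (by positivity)
  calc arvW β * ((β k + 1) / ((β.sum fun _ n => n) + 1)) ≤ arvW β * 1 :=
        mul_le_mul_of_nonneg_left hle1 (arvW_nonneg β)
    _ = arvW β := mul_one _

/-- In the Arveson space (inner product `⟨f,g⟩ = Σ_α (α!/|α|!) f_α conj(g_α)`), the adjoint
of multiplication by the variable `z_k` is the Leibenzon operator `𝓡_k`:
`⟨M_k f, g⟩ = ⟨f, 𝓡_k g⟩`. -/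
theorem stmt15 (k : ℕ) (f g : (ℕ →₀ ℕ) → ℂ)
    (hf : Summable fun α : ℕ →₀ ℕ =>
      (α.prod fun _ n => (n.factorial : ℝ)) / ((α.sum fun _ n => n).factorial : ℝ) *
        ‖f α‖ ^ 2)
    (hg : Summable fun α : ℕ →₀ ℕ =>
      (α.prod fun _ n => (n.factorial : ℝ)) / ((α.sum fun _ n => n).factorial : ℝ) *
        ‖g α‖ ^ 2) :
    Summable (fun α : ℕ →₀ ℕ =>
      (α.prod fun _ n => (n.factorial : ℂ)) / (((α.sum fun _ n => n).factorial : ℕ) : ℂ) *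
        (if 1 ≤ α k then f (α - Finsupp.single k 1) else 0) * (starRingEnd ℂ) (g α)) ∧
    Summable (fun β : ℕ →₀ ℕ =>
      (β.prod fun _ n => (n.factorial : ℂ)) / (((β.sum fun _ n => n).factorial : ℕ) : ℂ) *
        f β *
        (starRingEnd ℂ) ((((β k : ℂ) + 1) / (((β.sum fun _ n => n : ℕ) : ℂ) + 1)) *
          g (β + Finsupp.single k 1))) ∧
    (∑' α : ℕ →₀ ℕ,
        (α.prod fun _ n => (n.factorial : ℂ)) / (((α.sum fun _ n => n).factorial : ℕ) : ℂ) *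
          (if 1 ≤ α k then f (α - Finsupp.single k 1) else 0) * (starRingEnd ℂ) (g α)) =
      ∑' β : ℕ →₀ ℕ,
        (β.prod fun _ n => (n.factorial : ℂ)) / (((β.sum fun _ n => n).factorial : ℕ) : ℂ) *
          f β *
          (starRingEnd ℂ) ((((β k : ℂ) + 1) / (((β.sum fun _ n => n : ℕ) : ℂ) + 1)) *
            g (β + Finsupp.single k 1)) := by
  classical
  set i : (ℕ →₀ ℕ) → (ℕ →₀ ℕ) := fun β => β + Finsupp.single k 1 with hi
  have hinj : Function.Injective i := add_left_injective _
  set F : (ℕ →₀ ℕ) → ℂ := fun α =>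
    (α.prod fun _ n => (n.factorial : ℂ)) / (((α.sum fun _ n => n).factorial : ℕ) : ℂ) *
      (if 1 ≤ α k then f (α - Finsupp.single k 1) else 0) * (starRingEnd ℂ) (g α) with hF
  set G : (ℕ →₀ ℕ) → ℂ := fun β =>
    (β.prod fun _ n => (n.factorial : ℂ)) / (((β.sum fun _ n => n).factorial : ℕ) : ℂ) *
      f β *
      (starRingEnd ℂ) ((((β k : ℂ) + 1) / (((β.sum fun _ n => n : ℕ) : ℂ) + 1)) *
        g (β + Finsupp.single k 1)) with hG
  have hfW : Summable fun β => arvW β * ‖f β‖ ^ 2 := hf.congr fun β => by rw [arvW]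
  have hgW : Summable fun β => arvW β * ‖g β‖ ^ 2 := hg.congr fun β => by rw [arvW]
  -- G in clean form
  have hGeq : ∀ β, G β = ((arvW (i β) : ℝ) : ℂ) * f β * (starRingEnd ℂ) (g (i β)) := by
    intro β
    rw [hG]
    simp only [hi]
    rw [arvW_C β, arvW_shift k β, Complex.ofReal_mul, cast_ratio]
    simp only [map_mul, map_div₀, map_add, map_one, Complex.conj_natCast]
    ring
  -- F ∘ i = G
  have hFcomp : ∀ β, F (i β) = G β := by
    intro β
    have hik : i β k = β k + 1 := by simp [hi]
    have hsub : i β - Finsupp.single k 1 = β := by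
      simp only [hi]; exact add_tsub_cancel_right _ _
    rw [hGeq β, hF]
    simp only
    rw [hik, hsub, if_pos (Nat.le_add_left 1 _), arvW_C (i β)]
  -- F vanishes off range of i
  have hFzero : Function.support F ⊆ Set.range i := by
    intro α hα
    by_contra hr
    apply hα
    have hαk : α k = 0 := by
      by_contra h
      exact hr ⟨α - Finsupp.single k 1, by
        simp only [hi]
        ext j
        rcases eq_or_ne j k with rfl | hj
        · simp [Finsupp.single_apply]; omega
        · simp [Finsupp.single_apply, hj.symm, Finsupp.tsub_apply]⟩
    rw [hF]
    simp [hαk]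
  -- summability of G
  have hsa : Summable fun β => (Real.sqrt (arvW β) * ‖f β‖) ^ 2 := by
    apply hfW.congr
    intro β
    rw [mul_pow, Real.sq_sqrt (arvW_nonneg β)]
  have hsb : Summable fun β => (Real.sqrt (arvW (i β)) * ‖g (i β)‖) ^ 2 := by
    have h := hgW.comp_injective hinj
    apply h.congr
    intro β
    simp only [Function.comp_apply]
    rw [mul_pow, Real.sq_sqrt (arvW_nonneg _)]
  have hGnorm : Summable fun β => ‖G β‖ := by
    apply Summable.of_nonneg_of_le (fun β => norm_nonneg _)
      (fun β => ?_) ((hsa.add hsb).div_const 2)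
    have h1 : ‖G β‖ = arvW (i β) * ‖f β‖ * ‖g (i β)‖ := by
      rw [hGeq β, norm_mul, norm_mul, Complex.norm_real, RCLike.norm_conj,
        Real.norm_of_nonneg (arvW_nonneg _)]
    rw [h1]
    have hx : arvW β = Real.sqrt (arvW β) ^ 2 := (Real.sq_sqrt (arvW_nonneg β)).symm
    have hy : arvW (i β) = Real.sqrt (arvW (i β)) ^ 2 := (Real.sq_sqrt (arvW_nonneg _)).symm
    have hle : Real.sqrt (arvW (i β)) ≤ Real.sqrt (arvW β) := Real.sqrt_le_sqrt (arvW_le k β)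
    have hx0 : (0:ℝ) ≤ Real.sqrt (arvW β) := Real.sqrt_nonneg _
    have hy0 : (0:ℝ) ≤ Real.sqrt (arvW (i β)) := Real.sqrt_nonneg _
    have hf0 : (0:ℝ) ≤ ‖f β‖ := norm_nonneg _
    have hg0 : (0:ℝ) ≤ ‖g (i β)‖ := norm_nonneg _
    have e1 : arvW (i β) * ‖f β‖ * ‖g (i β)‖
        = (Real.sqrt (arvW (i β)) * ‖f β‖) * (Real.sqrt (arvW (i β)) * ‖g (i β)‖) := by
      linear_combination (‖f β‖ * ‖g (i β)‖) * hy
    have e2 : (Real.sqrt (arvW (i β)) * ‖f β‖) * (Real.sqrt (arvW (i β)) * ‖g (i β)‖)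
        ≤ (Real.sqrt (arvW β) * ‖f β‖) * (Real.sqrt (arvW (i β)) * ‖g (i β)‖) :=
      mul_le_mul_of_nonneg_right (mul_le_mul_of_nonneg_right hle hf0) (by positivity)
    have e3 : (Real.sqrt (arvW β) * ‖f β‖) * (Real.sqrt (arvW (i β)) * ‖g (i β)‖)
        ≤ ((Real.sqrt (arvW β) * ‖f β‖) ^ 2 + (Real.sqrt (arvW (i β)) * ‖g (i β)‖) ^ 2) / 2 := by
      nlinarith [sq_nonneg (Real.sqrt (arvW β) * ‖f β‖ - Real.sqrt (arvW (i β)) * ‖g (i β)‖)]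
    rw [e1]
    exact e2.trans e3
  have hGs : Summable G := hGnorm.of_norm
  have hFs : Summable F := by
    rw [← hinj.summable_iff (fun x hx => by
      by_contra h; exact hx (hFzero h))]
    exact hGs.congr fun β => (hFcomp β).symm
  refine ⟨hFs, hGs, ?_⟩
  rw [← hinj.tsum_eq hFzero]
  exact tsum_congr hFcomp
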